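/- Let a ∈ ℂ be nonzero, and for a side-vector triple (a,b,c) with a+b+c = 0 set u = a+(2−√3)b, v = (2−√3)a+b, q = u+v·j, and let (x,y,z) denote the (i,j,k)-components of q⁻¹ · i · q. Then: (1) for the double point with c = 0, i.e. (a,b,c) = (a,−a,0), one gets (x,y,z) = (0,0,−1); (2) for the double point with b = 0, i.e. (a,b,c) = (a,0,−a), one gets (x,y,z) = (√3/2, 0, 1/2); (3) for the double point with a-slot zero, i.e. side vectors (0,b,−b) with b ≠ 0 (so u = (2−√3)b, v = b), one gets (x,y,z) = (−√3/2, 0, 1/2). Thus the three double-point classes map to three distinct points on the great circle y = 0 of the unit sphere. -/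

import Mathlib

/-- The quaternion `u + v·j` attached to a pair `(u,v) ∈ ℂ²`, with components
`(Re u, Im u, Re v, Im v)` in the basis `(1, i, j, k)`. -/
def toQuat (u v : ℂ) : Quaternion ℝ := ⟨u.re, u.im, v.re, v.im⟩

/-- The quaternion `i`, with components `(0,1,0,0)`. -/
def qi : Quaternion ℝ := ⟨0, 1, 0, 0⟩

/-- The quaternion with components `(r, x, y, z)` in the basis `(1, i, j, k)`. -/
def mkQ (r x y z : ℝ) : Quaternion ℝ := ⟨r, x, y, z⟩

lemma toQuat_ne_left {u v : ℂ} (hu : u ≠ 0) : toQuat u v ≠ 0 := by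
  intro h
  apply hu
  have h1 := congrArg QuaternionAlgebra.re h
  have h2 := congrArg QuaternionAlgebra.imI h
  simp [toQuat] at h1 h2
  exact Complex.ext h1 h2

lemma toQuat_ne_right {u v : ℂ} (hv : v ≠ 0) : toQuat u v ≠ 0 := by
  intro h
  apply hv
  have h1 := congrArg QuaternionAlgebra.imJ h
  have h2 := congrArg QuaternionAlgebra.imK h
  simp [toQuat] at h1 h2
  exact Complex.ext h1 h2

lemma conj_eq {q r : Quaternion ℝ} (hq : q ≠ 0) (h : qi * q = q * r) :
    q⁻¹ * qi * q = r := by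
  rw [mul_assoc, h, ← mul_assoc, inv_mul_cancel₀ hq, one_mul]

lemma sqrt3_sq : Real.sqrt 3 * Real.sqrt 3 = 3 :=
  Real.mul_self_sqrt (by norm_num)

set_option linter.unreachableTactic false
set_option linter.unusedTactic false

/-- with `k = 2−√3`, `u = a+k·b`, `v = k·a+b`, `q = u+vj`, and
`(x,y,z)` the `(i,j,k)`-components of `q⁻¹·i·q`:
(1) the double point `(a,b,c) = (a,−a,0)` (with `a ≠ 0`) gives `(x,y,z) = (0,0,−1)`;
(2) the double point `(a,0,−a)` gives `(x,y,z) = (√3/2, 0, 1/2)`;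
(3) the double point `(0,b,−b)` (with `b ≠ 0`) gives `(x,y,z) = (−√3/2, 0, 1/2)`.
Thus the three double-point classes map to three distinct points of the great
circle `y = 0` on the unit sphere. -/
theorem stmt13 (k : ℂ) (hk : k = 2 - (Real.sqrt 3 : ℂ)) :
    (∀ a : ℂ, a ≠ 0 →
      (toQuat (a + k * (-a)) (k * a + (-a)))⁻¹ * qi * toQuat (a + k * (-a)) (k * a + (-a))
        = mkQ 0 0 0 (-1)) ∧
    (∀ a : ℂ, a ≠ 0 →
      (toQuat (a + k * 0) (k * a + 0))⁻¹ * qi * toQuat (a + k * 0) (k * a + 0)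
        = mkQ 0 (Real.sqrt 3 / 2) 0 (1 / 2)) ∧
    (∀ b : ℂ, b ≠ 0 →
      (toQuat (0 + k * b) (k * 0 + b))⁻¹ * qi * toQuat (0 + k * b) (k * 0 + b)
        = mkQ 0 (-(Real.sqrt 3 / 2)) 0 (1 / 2)) ∧
    mkQ 0 0 0 (-1) ≠ mkQ 0 (Real.sqrt 3 / 2) 0 (1 / 2) ∧
    mkQ 0 0 0 (-1) ≠ mkQ 0 (-(Real.sqrt 3 / 2)) 0 (1 / 2) ∧
    mkQ 0 (Real.sqrt 3 / 2) 0 (1 / 2) ≠ mkQ 0 (-(Real.sqrt 3 / 2)) 0 (1 / 2) := by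
  have hs := sqrt3_sq
  have hsne : ((Real.sqrt 3 : ℂ) - 1) ≠ 0 := by
    intro h
    have := congrArg Complex.re h
    simp [Complex.sub_re] at this
    nlinarith
  subst hk
  refine ⟨?_, ?_, ?_, ?_, ?_, ?_⟩
  · intro a ha
    apply conj_eq
    · apply toQuat_ne_left (v := (2 - (Real.sqrt 3 : ℂ)) * a + (-a))
      have h1 : (a + (2 - (Real.sqrt 3 : ℂ)) * (-a)) = ((Real.sqrt 3 : ℂ) - 1) * a := by ring
      rw [h1]
      exact mul_ne_zero hsne ha
    · ext <;>
        simp only [Quaternion.re_mul, Quaternion.imI_mul, Quaternion.imJ_mul, Quaternion.imK_mul] <;>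
        simp only [toQuat, qi, mkQ, Quaternion.re_mul, Quaternion.imI_mul, Quaternion.imJ_mul,
          Quaternion.imK_mul, Complex.add_re, Complex.add_im, Complex.mul_re, Complex.mul_im,
          Complex.sub_re, Complex.sub_im, Complex.neg_re, Complex.neg_im, Complex.ofReal_re,
          Complex.ofReal_im, Complex.zero_re, Complex.zero_im] <;>
        norm_num <;>
        first
          | ring1
          | linear_combination (a.im / 2) * hs
          | linear_combination (-(a.im / 2)) * hs
          | linear_combination (a.re / 2) * hs
          | linear_combination (-(a.re / 2)) * hs
  · intro a ha
    apply conj_eq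
    · exact toQuat_ne_left (by simpa using ha)
    · ext <;>
        simp only [Quaternion.re_mul, Quaternion.imI_mul, Quaternion.imJ_mul, Quaternion.imK_mul] <;>
        simp only [toQuat, qi, mkQ, Quaternion.re_mul, Quaternion.imI_mul, Quaternion.imJ_mul,
          Quaternion.imK_mul, Complex.add_re, Complex.add_im, Complex.mul_re, Complex.mul_im,
          Complex.sub_re, Complex.sub_im, Complex.neg_re, Complex.neg_im, Complex.ofReal_re,
          Complex.ofReal_im, Complex.zero_re, Complex.zero_im] <;>
        norm_num <;>
        first
          | ring1
          | linear_combination (a.im / 2) * hs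
          | linear_combination (-(a.im / 2)) * hs
          | linear_combination (a.re / 2) * hs
          | linear_combination (-(a.re / 2)) * hs
  · intro b hb
    apply conj_eq
    · exact toQuat_ne_right (by simpa using hb)
    · ext <;>
        simp only [Quaternion.re_mul, Quaternion.imI_mul, Quaternion.imJ_mul, Quaternion.imK_mul] <;>
        simp only [toQuat, qi, mkQ, Quaternion.re_mul, Quaternion.imI_mul, Quaternion.imJ_mul,
          Quaternion.imK_mul, Complex.add_re, Complex.add_im, Complex.mul_re, Complex.mul_im,
          Complex.sub_re, Complex.sub_im, Complex.neg_re, Complex.neg_im, Complex.ofReal_re,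
          Complex.ofReal_im, Complex.zero_re, Complex.zero_im] <;>
        norm_num <;>
        first
          | ring1
          | linear_combination (b.im / 2) * hs
          | linear_combination (-(b.im / 2)) * hs
          | linear_combination (b.re / 2) * hs
          | linear_combination (-(b.re / 2)) * hs
  · intro h
    have := congrArg QuaternionAlgebra.imK h
    simp [mkQ] at this
    norm_num at this
  · intro h
    have := congrArg QuaternionAlgebra.imK h
    simp [mkQ] at this
    norm_num at this
  · intro h
    have := congrArg QuaternionAlgebra.imI h
    simp [mkQ] at this
    nlinarith
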